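/- Let v ∈ V and suppose in addition that v_{i,j} ∈ t^{ν*_i − ν*_j}𝒪 for every case-(B) pair (i,j). Set u = x⁻¹ v x. Then u_{i,j} ∈ t^{λ_i − λ_j}𝒪 for every pair (i,j) of case (C) and for every pair (i,j) of case (D), and u_{p,j} ∈ t^{λ_p − λ_j − N}𝒪 for every pair (p,j) of case (E). -/

import Mathlib

open Matrix

noncomputable section

/-- The ring `𝒪 = ℂ[[t]]` of formal power series. -/
abbrev OO : Type := PowerSeries ℂ

/-- The field `K = ℂ((t))` of formal Laurent series. -/
abbrev KK : Type := LaurentSeries ℂ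

/-- `t^k ∈ K` for an integer `k`. -/
def tz (k : ℤ) : KK := HahnSeries.single k 1

/-- The inclusion `𝒪 → K`. -/
def coeO : OO →+* KK := HahnSeries.ofPowerSeries ℤ ℂ

/-- `f` belongs to the `𝒪`-lattice `t^k 𝒪 ⊆ K`. -/
def memT (k : ℤ) (f : KK) : Prop := ∃ w : OO, f = tz k * coeO w

/-- The `GL`-coordinates of the coroot `β∨ = e_p − e_{q+1}` (indices `0`-based). -/
def bcov (p q : ℕ) (i : ℕ) : ℤ := (if i = p then 1 else 0) - (if i = q + 1 then 1 else 0)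

/-- The matrix `x = I + Σ_{j=p+1}^{q+1} t^{λ_p − λ_j − N} E_{p,j}` (indices `0`-based). -/
def xMat (n N p q : ℕ) (lam : ℕ → ℤ) : Matrix (Fin (n+1)) (Fin (n+1)) KK :=
  Matrix.of fun i j =>
    if i = j then 1
    else if (i : ℕ) = p ∧ p < (j : ℕ) ∧ (j : ℕ) ≤ q + 1 then tz (lam p - lam j - N)
    else 0

/-- Case (B): `i ≠ p` and (`j ≤ p` or `j > q+1`). -/
def caseB (p q i j : ℕ) : Prop := i ≠ p ∧ (j ≤ p ∨ q + 1 < j)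

/-- Case (C): `i = p` and `j > q+1`. -/
def caseC (p q i j : ℕ) : Prop := i = p ∧ q + 1 < j

/-- Case (D): `p < j ≤ q+1` and `i ≠ p`. -/
def caseD (p q i j : ℕ) : Prop := p < j ∧ j ≤ q + 1 ∧ i ≠ p

/-- Case (E): `i = p` and `p < j ≤ q+1`. -/
def caseE (p q i j : ℕ) : Prop := i = p ∧ p < j ∧ j ≤ q + 1

lemma tz_mul_tz (a b : ℤ) : tz a * tz b = tz (a+b) := by
  simp [tz, HahnSeries.single_mul_single]

lemma coeO_X_pow (m : ℕ) : coeO (PowerSeries.X ^ m) = tz m := by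
  rw [map_pow, coeO, HahnSeries.ofPowerSeries_X, tz, HahnSeries.single_pow]
  norm_num

lemma memT_zero (k : ℤ) : memT k 0 := ⟨0, by simp⟩

lemma memT_add {k : ℤ} {f g : KK} (hf : memT k f) (hg : memT k g) :
    memT k (f + g) := by
  obtain ⟨w, rfl⟩ := hf; obtain ⟨w', rfl⟩ := hg
  exact ⟨w + w', by rw [map_add, mul_add]⟩

lemma memT_neg {k : ℤ} {f : KK} (hf : memT k f) : memT k (-f) := by
  obtain ⟨w, rfl⟩ := hf
  exact ⟨-w, by rw [map_neg]; ring⟩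

lemma memT_sub {k : ℤ} {f g : KK} (hf : memT k f) (hg : memT k g) :
    memT k (f - g) := by
  rw [sub_eq_add_neg]; exact memT_add hf (memT_neg hg)

lemma memT_mono {k k' : ℤ} {f : KK} (h : k' ≤ k) (hf : memT k f) : memT k' f := by
  obtain ⟨w, rfl⟩ := hf
  refine ⟨PowerSeries.X ^ (k - k').toNat * w, ?_⟩
  rw [_root_.map_mul, coeO_X_pow, ← mul_assoc, tz_mul_tz]
  congr 2
  omega

lemma memT_tz_mul {k : ℤ} {f : KK} (m : ℤ) (hf : memT k f) :
    memT (m + k) (tz m * f) := by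
  obtain ⟨w, rfl⟩ := hf
  exact ⟨w, by rw [← mul_assoc, tz_mul_tz]⟩

lemma memT_mul_tz {k : ℤ} {f : KK} (m : ℤ) (hf : memT k f) :
    memT (k + m) (f * tz m) := by
  rw [mul_comm, add_comm]; exact memT_tz_mul m hf

lemma memT_sum {k : ℤ} {α : Type*} {s : Finset α} {f : α → KK}
    (h : ∀ a ∈ s, memT k (f a)) : memT k (∑ a ∈ s, f a) := by
  classical
  induction s using Finset.induction_on with
  | empty => simpa using memT_zero k
  | insert _ _ hx ih =>
    rw [Finset.sum_insert hx]
    exact memT_add (h _ (Finset.mem_insert_self _ _))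
      (ih fun a ha => h a (Finset.mem_insert_of_mem ha))

def Emat (n N p q : ℕ) (lam : ℕ → ℤ) : Matrix (Fin (n+1)) (Fin (n+1)) KK :=
  Matrix.of fun i j =>
    if (i : ℕ) = p ∧ p < (j : ℕ) ∧ (j : ℕ) ≤ q + 1 then tz (lam p - lam j - N) else 0

lemma xMat_eq (n N p q : ℕ) (lam : ℕ → ℤ) :
    xMat n N p q lam = 1 + Emat n N p q lam := by
  ext i j
  by_cases h : i = j
  · subst h
    have : ¬((i : ℕ) = p ∧ p < (i : ℕ) ∧ (i : ℕ) ≤ q + 1) := by omega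
    simp [xMat, Emat, this, Matrix.one_apply]
  · simp [xMat, Emat, h, Matrix.one_apply]

lemma Emat_sq (n N p q : ℕ) (lam : ℕ → ℤ) :
    Emat n N p q lam * Emat n N p q lam = 0 := by
  apply Matrix.ext
  intro i j
  rw [Matrix.mul_apply, Matrix.zero_apply]
  apply Finset.sum_eq_zero
  intro a _
  by_cases h : (a : ℕ) = p
  · have : ¬((i : ℕ) = p ∧ p < (a : ℕ) ∧ (a : ℕ) ≤ q + 1) := by omega
    simp [Emat, this]
  · simp [Emat, h]

lemma xMat_inv (n N p q : ℕ) (lam : ℕ → ℤ) :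
    (xMat n N p q lam)⁻¹ = 1 - Emat n N p q lam := by
  apply Matrix.inv_eq_right_inv
  rw [xMat_eq]
  have h : (1 + Emat n N p q lam) * (1 - Emat n N p q lam)
      = 1 + Emat n N p q lam - (Emat n N p q lam + Emat n N p q lam * Emat n N p q lam) := by
    rw [mul_sub, mul_one, add_mul, one_mul]
  rw [h, Emat_sq, add_zero]
  abel

lemma mulE_apply (n N p q : ℕ) (lam : ℕ → ℤ) (hp : p < n + 1)
    (M : Matrix (Fin (n+1)) (Fin (n+1)) KK) (i j : Fin (n+1)) :
    (M * Emat n N p q lam) i j =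
      if p < (j : ℕ) ∧ (j : ℕ) ≤ q + 1 then M i ⟨p, hp⟩ * tz (lam p - lam j - N) else 0 := by
  rw [Matrix.mul_apply, Finset.sum_eq_single (⟨p, hp⟩ : Fin (n+1))]
  · by_cases hc : p < (j : ℕ) ∧ (j : ℕ) ≤ q + 1
    · simp [Emat, hc]
    · simp [Emat, hc]
  · intro a _ ha
    have : (a : ℕ) ≠ p := fun h => ha (Fin.ext h)
    simp [Emat, this]
  · simp

lemma Emul_apply (n N p q : ℕ) (lam : ℕ → ℤ)
    (M : Matrix (Fin (n+1)) (Fin (n+1)) KK) (i j : Fin (n+1)) :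
    (Emat n N p q lam * M) i j =
      if (i : ℕ) = p then
        ∑ a ∈ Finset.univ.filter (fun a : Fin (n+1) => p < (a : ℕ) ∧ (a : ℕ) ≤ q + 1),
          tz (lam p - lam a - N) * M a j
      else 0 := by
  rw [Matrix.mul_apply]
  by_cases h : (i : ℕ) = p
  · rw [if_pos h, Finset.sum_filter]
    refine Finset.sum_congr rfl fun a _ => ?_
    by_cases hc : p < (a : ℕ) ∧ (a : ℕ) ≤ q + 1
    · simp [Emat, h, hc]
    · simp [Emat, hc, fun h2 : (i:ℕ) = p ∧ p < (a:ℕ) ∧ (a:ℕ) ≤ q+1 => hc h2.2]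
  · rw [if_neg h]
    refine Finset.sum_eq_zero fun a _ => ?_
    simp [Emat, h]

/-- Lemma 4.4: if `v ∈ V` and moreover `v_{i,j} ∈ t^{ν*_i−ν*_j}𝒪` for every
case-(B) pair, then `u = x⁻¹ v x` satisfies `u_{i,j} ∈ t^{λ_i−λ_j}𝒪` in cases (C) and (D),
and `u_{p,j} ∈ t^{λ_p−λ_j−N}𝒪` in case (E).
(Indices are `0`-based: rows and columns run through `0,…,n`, and `0 ≤ p ≤ q ≤ n−1`.) -/
theorem stmt6 (n : ℕ) (hn : 1 ≤ n) (N : ℕ) (hN : 1 ≤ N)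
    (p q : ℕ) (hpq : p ≤ q) (hq : q < n)
    (lam mu : ℕ → ℤ)
    (hlam : ∀ i j : ℕ, i ≤ j → j ≤ n → lam j ≤ lam i)
    (hmu : ∀ i j : ℕ, i ≤ j → j ≤ n → mu j ≤ mu i)
    (nus : ℕ → ℤ) (hnus : ∀ i, nus i = lam i + mu i - N * bcov p q i)
    (hnusdom : ∀ i j : ℕ, i ≤ j → j ≤ n → nus j ≤ nus i)
    (h2a : (N : ℤ) ≤ lam p - lam (p + 1)) (h2b : (N : ℤ) ≤ lam q - lam (q + 1))
    (h2c : (N : ℤ) ≤ mu p - mu (p + 1)) (h2d : (N : ℤ) ≤ mu q - mu (q + 1))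
    (v : Matrix (Fin (n+1)) (Fin (n+1)) KK)
    (hvtr : Matrix.trace v = 0)
    (hvO : ∀ i j : Fin (n+1), memT 0 (v i j))
    (hvlam : ∀ i j : Fin (n+1), i < j → memT (lam i - lam j) (v i j))
    (hvB : ∀ i j : Fin (n+1), i < j → caseB p q i j → memT (nus i - nus j) (v i j)) :
    ∀ i j : Fin (n+1), i < j →
      ((caseC p q i j ∨ caseD p q i j) →
        memT (lam i - lam j) (((xMat n N p q lam)⁻¹ * v * xMat n N p q lam) i j)) ∧
      (caseE p q i j →
        memT (lam i - lam j - N) (((xMat n N p q lam)⁻¹ * v * xMat n N p q lam) i j)) := by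
  have hp : p < n + 1 := by omega
  set E := Emat n N p q lam with hE
  have hu : (xMat n N p q lam)⁻¹ * v * xMat n N p q lam
      = v + v * E - E * v - E * (v * E) := by
    rw [xMat_inv, xMat_eq, ← hE]
    noncomm_ring
    simp only [smul_mul_assoc]
    abel
  have hentry : ∀ i j : Fin (n+1),
      ((xMat n N p q lam)⁻¹ * v * xMat n N p q lam) i j
        = v i j + (v * E) i j - (E * v) i j - (E * (v * E)) i j := by
    intro i j
    rw [hu]
    simp [Matrix.sub_apply, Matrix.add_apply]
  intro i j hij
  have hijn : (i : ℕ) < (j : ℕ) := hij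
  have hjn : (j : ℕ) ≤ n := by omega
  have hin : (i : ℕ) ≤ n := by omega
  constructor
  · rintro (hC | hD)
    · -- Case C : i = p, q+1 < j
      simp only [caseC] at hC
      obtain ⟨hiC, hjC⟩ := hC
      have hc1 : ¬(p < (j : ℕ) ∧ (j : ℕ) ≤ q + 1) := by omega
      rw [hentry, hE, mulE_apply n N p q lam hp, Emul_apply, Emul_apply,
        if_neg hc1, if_pos hiC, if_pos hiC, add_zero]
      simp only [mulE_apply n N p q lam hp, if_neg hc1, mul_zero,
        Finset.sum_const_zero, sub_zero]
      apply memT_sub (hvlam i j hij)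
      apply memT_sum
      intro a ha
      rw [Finset.mem_filter] at ha
      obtain ⟨-, hpa, haq1⟩ := ha
      have haj : a < j := by
        rw [Fin.lt_def]; omega
      have hB : caseB p q (a : ℕ) (j : ℕ) := ⟨by omega, Or.inr hjC⟩
      refine memT_mono ?_ (memT_tz_mul (lam p - lam a - N) (hvB a j haj hB))
      have hjp : (j : ℕ) ≠ p := by omega
      have hjq1 : (j : ℕ) ≠ q + 1 := by omega
      have hap : (a : ℕ) ≠ p := by omega
      have han : (a : ℕ) ≤ n := by omega
      simp only [hnus, bcov, if_neg hjp, if_neg hjq1, if_neg hap]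
      rw [hiC]
      have m1 : mu (j : ℕ) ≤ mu (q + 1) := hmu (q + 1) (j : ℕ) (by omega) hjn
      by_cases haq : (a : ℕ) = q + 1
      · rw [haq]
        simp only [if_pos rfl, reduceIte]
        linarith
      · rw [if_neg haq]
        have m2 : mu q ≤ mu (a : ℕ) := hmu (a : ℕ) q (by omega) (by omega)
        linarith
    · -- Case D : p < j ≤ q+1, i ≠ p
      simp only [caseD] at hD
      obtain ⟨hpj, hjq, hip⟩ := hD
      rw [hentry, hE, mulE_apply n N p q lam hp, Emul_apply, Emul_apply,
        if_neg hip, if_neg hip, if_pos ⟨hpj, hjq⟩, sub_zero, sub_zero]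
      apply memT_add (hvlam i j hij)
      by_cases hip2 : (i : ℕ) < p
      · have hilt : i < (⟨p, hp⟩ : Fin (n+1)) := by
          rw [Fin.lt_def]; exact hip2
        have hB : caseB p q (i : ℕ) p := ⟨hip, Or.inl le_rfl⟩
        refine memT_mono ?_
          (memT_mul_tz (lam p - lam (j : ℕ) - N) (hvB i ⟨p, hp⟩ hilt hB))
        have hipne : (i : ℕ) ≠ p := hip
        have hiq1 : (i : ℕ) ≠ q + 1 := by omega
        have hpq1 : p ≠ q + 1 := by omega
        simp only [Fin.val_mk, hnus, bcov, if_neg hipne, if_neg hiq1, if_pos rfl,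
          if_neg hpq1, reduceIte]
        have m1 : mu p ≤ mu (i : ℕ) := hmu (i : ℕ) p (by omega) (by omega)
        linarith
      · have hpi : p < (i : ℕ) := by omega
        refine memT_mono ?_
          (memT_mul_tz (lam p - lam (j : ℕ) - N) (hvO i ⟨p, hp⟩))
        have m1 : lam (i : ℕ) ≤ lam (p + 1) := hlam (p + 1) (i : ℕ) (by omega) hin
        linarith
  · -- Case E : i = p, p < j ≤ q+1
    intro hEc
    simp only [caseE] at hEc
    obtain ⟨hiE, hpj, hjq⟩ := hEc
    have hcj : p < (j : ℕ) ∧ (j : ℕ) ≤ q + 1 := ⟨hpj, hjq⟩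
    rw [hentry, hE, mulE_apply n N p q lam hp, Emul_apply, Emul_apply,
      if_pos hcj, if_pos hiE, if_pos hiE]
    simp only [mulE_apply n N p q lam hp, if_pos hcj]
    refine memT_sub (memT_sub (memT_add ?_ ?_) ?_) ?_
    · refine memT_mono ?_ (hvlam i j hij)
      have : (0:ℤ) ≤ N := by positivity
      linarith
    · refine memT_mono ?_ (memT_mul_tz (lam p - lam (j : ℕ) - N) (hvO i ⟨p, hp⟩))
      rw [hiE]
      linarith
    · apply memT_sum
      intro a ha
      rw [Finset.mem_filter] at ha
      obtain ⟨-, hpa, haq1⟩ := ha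
      have han : (a : ℕ) ≤ n := by omega
      by_cases hajlt : (a : ℕ) < (j : ℕ)
      · have haj : a < j := by rw [Fin.lt_def]; exact hajlt
        refine memT_mono ?_ (memT_tz_mul (lam p - lam (a : ℕ) - N) (hvlam a j haj))
        rw [hiE]
        linarith
      · have hja : (j : ℕ) ≤ (a : ℕ) := by omega
        refine memT_mono ?_ (memT_tz_mul (lam p - lam (a : ℕ) - N) (hvO a j))
        have m1 : lam (a : ℕ) ≤ lam (j : ℕ) := hlam (j : ℕ) (a : ℕ) hja han
        rw [hiE]
        linarith
    · apply memT_sum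
      intro a ha
      rw [Finset.mem_filter] at ha
      obtain ⟨-, hpa, haq1⟩ := ha
      have han : (a : ℕ) ≤ n := by omega
      refine memT_mono ?_ (memT_tz_mul (lam p - lam (a : ℕ) - N)
        (memT_mul_tz (lam p - lam (j : ℕ) - N) (hvO a ⟨p, hp⟩)))
      have m1 : lam (a : ℕ) ≤ lam (p + 1) := hlam (p + 1) (a : ℕ) (by omega) han
      rw [hiE]
      linarith
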